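/- Let k be a commutative ring, λ ∈ k, X a set, and A = MonoidAlgebra k (FreeMonoid X) with the k-linear map Δ_λ : A → A ⊗[k] A defined on the basis of words by Δ_λ(1) = −λ(1⊗1) and, for m ≥ 1, Δ_λ(x₁⋯x_m) = Σ_{i=1}^{m} (x₁⋯x_i) ⊗ (x_i⋯x_m) + λ Σ_{i=1}^{m−1} (x₁⋯x_i) ⊗ (x_{i+1}⋯x_m). Let H be an associative unital k-algebra with a k-linear map Δ_H : H → H ⊗[k] H that is coassociative and satisfies Δ_H(ab) = a·Δ_H(b) + Δ_H(a)·b + λ(a⊗b) for all a, b ∈ H. Let f : X → H be a map whose images are group-like, i.e. Δ_H(f(x)) = f(x) ⊗ f(x) for every x ∈ X, and let φ : A → H be the unique k-algebra homomorphism with φ(x) = f(x) for every single-letter word x ∈ X. Then φ is a coalgebra morphism: Δ_H ∘ φ = (φ ⊗ φ) ∘ Δ_λ. -/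

import Mathlib

open TensorProduct

/-- The basis element of the monoid algebra of the free monoid corresponding to
the word `x₁ ⋯ x_m` given by the list `l = [x₁, …, x_m]`. -/
noncomputable def word (k : Type*) [CommRing k] {X : Type*} (l : List X) :
    MonoidAlgebra k (FreeMonoid X) :=
  MonoidAlgebra.of k (FreeMonoid X) (FreeMonoid.ofList l)

/-- Universal property (coalgebra-morphism part): if `H` is an infinitesimal
unitary bialgebra of weight `λ`, `f : X → H` has group-like images, and
`φ` is the algebra homomorphism from the monoid algebra of the free monoid on
`X` to `H` extending `f`, then `φ` is compatible with the coproducts: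
`Δ_H ∘ φ = (φ ⊗ φ) ∘ Δ_λ`. -/
theorem algebra_hom_is_coalgebra_morphism
    {k : Type*} [CommRing k] {X : Type*} (lam : k)
    (Δ : MonoidAlgebra k (FreeMonoid X) →ₗ[k]
      MonoidAlgebra k (FreeMonoid X) ⊗[k] MonoidAlgebra k (FreeMonoid X))
    (hone : Δ 1 = -(lam • ((1 : MonoidAlgebra k (FreeMonoid X))
      ⊗ₜ[k] (1 : MonoidAlgebra k (FreeMonoid X)))))
    (hword : ∀ l : List X, l ≠ [] →
      Δ (word k l)
        = (∑ i ∈ Finset.range l.length,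
            word k (l.take (i + 1)) ⊗ₜ[k] word k (l.drop i))
          + lam • ∑ i ∈ Finset.range (l.length - 1),
            word k (l.take (i + 1)) ⊗ₜ[k] word k (l.drop (i + 1)))
    {H : Type*} [Ring H] [Algebra k H]
    (ΔH : H →ₗ[k] H ⊗[k] H)
    (hcoassoc : ∀ h : H,
      (TensorProduct.assoc k H H H) (LinearMap.rTensor H ΔH (ΔH h))
        = LinearMap.lTensor H ΔH (ΔH h))
    (hder : ∀ a b : H,
      ΔH (a * b) = (a ⊗ₜ[k] (1 : H)) * ΔH b + ΔH a * ((1 : H) ⊗ₜ[k] b)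
        + lam • (a ⊗ₜ[k] b))
    (f : X → H) (hf : ∀ x : X, ΔH (f x) = f x ⊗ₜ[k] f x)
    (φ : MonoidAlgebra k (FreeMonoid X) →ₐ[k] H)
    (hφ : ∀ x : X, φ (word k [x]) = f x) :
    ∀ a : MonoidAlgebra k (FreeMonoid X),
      ΔH (φ a) = TensorProduct.map φ.toLinearMap φ.toLinearMap (Δ a) := by
  classical
  -- ΔH 1 = -(lam • 1 ⊗ 1)
  have h1 : ΔH (1 : H) = -(lam • ((1 : H) ⊗ₜ[k] (1 : H))) := by
    have h := hder 1 1
    rw [one_mul, ← Algebra.TensorProduct.one_def, one_mul, mul_one, add_assoc,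
      left_eq_add] at h
    exact eq_neg_of_add_eq_zero_left h
  have wcons : ∀ (x : X) (t : List X), word k (x :: t) = word k [x] * word k t := by
    intro x t
    unfold word
    rw [← map_mul]
    rfl
  have pcons : ∀ (x : X) (t : List X),
      φ (word k (x :: t)) = f x * φ (word k t) := by
    intro x t
    rw [wcons, map_mul, hφ]
  -- key computation on words
  have key : ∀ l : List X, l ≠ [] →
      ΔH (φ (word k l)) =
        (∑ i ∈ Finset.range l.length,
            φ (word k (l.take (i + 1))) ⊗ₜ[k] φ (word k (l.drop i)))
          + lam • ∑ i ∈ Finset.range (l.length - 1),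
            φ (word k (l.take (i + 1))) ⊗ₜ[k] φ (word k (l.drop (i + 1))) := by
    intro l
    induction l with
    | nil => intro h; exact absurd rfl h
    | cons x t ih =>
      intro _
      rcases eq_or_ne t [] with rfl | ht
      · simp [hφ, hf x]
      · have hlen : t.length ≠ 0 := fun h => ht (List.length_eq_zero_iff.mp h)
        rw [pcons, hder, ih ht]
        -- rewrite RHS sums by peeling off the i = 0 term
        have e1 : (∑ i ∈ Finset.range (x :: t).length,
              φ (word k ((x :: t).take (i + 1))) ⊗ₜ[k] φ (word k ((x :: t).drop i)))
            = (∑ i ∈ Finset.range t.length,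
                φ (word k (x :: t.take (i + 1))) ⊗ₜ[k] φ (word k (t.drop i)))
              + φ (word k [x]) ⊗ₜ[k] φ (word k (x :: t)) := by
          rw [List.length_cons, Finset.sum_range_succ']
          simp [List.take_succ_cons, List.drop_succ_cons]
        have e2 : (∑ i ∈ Finset.range ((x :: t).length - 1),
              φ (word k ((x :: t).take (i + 1))) ⊗ₜ[k] φ (word k ((x :: t).drop (i + 1))))
            = (∑ i ∈ Finset.range (t.length - 1),
                φ (word k (x :: t.take (i + 1))) ⊗ₜ[k] φ (word k (t.drop (i + 1))))
              + φ (word k [x]) ⊗ₜ[k] φ (word k t) := by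
          rw [List.length_cons, Nat.add_sub_cancel,
            ← Nat.succ_pred_eq_of_ne_zero hlen, Finset.sum_range_succ']
          simp [List.take_succ_cons, List.drop_succ_cons]
        rw [e1, e2]
        -- now expand the multiplication on the left
        rw [mul_add, mul_smul_comm, Finset.mul_sum, Finset.mul_sum]
        have e3 : ∀ i, (f x ⊗ₜ[k] (1 : H)) *
              (φ (word k (t.take (i + 1))) ⊗ₜ[k] φ (word k (t.drop i)))
            = φ (word k (x :: t.take (i + 1))) ⊗ₜ[k] φ (word k (t.drop i)) := by
          intro i
          rw [Algebra.TensorProduct.tmul_mul_tmul, one_mul, pcons]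
        have e4 : ∀ i, (f x ⊗ₜ[k] (1 : H)) *
              (φ (word k (t.take (i + 1))) ⊗ₜ[k] φ (word k (t.drop (i + 1))))
            = φ (word k (x :: t.take (i + 1))) ⊗ₜ[k] φ (word k (t.drop (i + 1))) := by
          intro i
          rw [Algebra.TensorProduct.tmul_mul_tmul, one_mul, pcons]
        simp only [e3, e4]
        rw [hf x, Algebra.TensorProduct.tmul_mul_tmul, mul_one, ← pcons, ← hφ x]
        rw [smul_add]
        abel
  intro a
  induction a using MonoidAlgebra.induction_linear with
  | zero => simp
  | add p q hp hq => rw [map_add, map_add, map_add, hp, hq, map_add]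
  | single m c =>
    have hsm : (MonoidAlgebra.single m c : MonoidAlgebra k (FreeMonoid X))
        = c • word k m.toList := by
      rw [show word k m.toList = MonoidAlgebra.single m 1 from rfl, MonoidAlgebra.smul_single',
        mul_one]
    rw [hsm, map_smul, map_smul, map_smul, map_smul]
    congr 1
    rcases eq_or_ne m.toList [] with he | he
    · have : word k m.toList = 1 := by rw [he]; rfl
      rw [this, map_one, h1, hone]
      simp
    · rw [key _ he, hword _ he]
      simp [TensorProduct.map_tmul]
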